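/- Suppose ζ > 1, E|X⁻|^ζ < ∞, and F₂(Y) is uniform on (0,1). Then for every p ∈ (0,1), |Cov(X⁻, F₂(Y) | F₂(Y) > 1-p)| ≤ (2/p) (E|X⁻|^ζ)^{1/ζ} (P(X < 0, 1-F₂(Y) < p))^{1-1/ζ}. -/

import Mathlib

open MeasureTheory ProbabilityTheory

/-- Hölder bound for the conditional covariance of the negative part `X⁻ = min(X,0)`
with `F₂(Y)` given `{F₂(Y) > 1-p}`. -/
theorem stmt_5 {Ω : Type*} [MeasureSpace Ω] [IsProbabilityMeasure (ℙ : Measure Ω)]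
    (X Y : Ω → ℝ) (hmX : Measurable X) (hmY : Measurable Y)
    (F₂ : ℝ → ℝ) (hmF₂ : Measurable F₂)
    (huni : Measure.map (fun ω => F₂ (Y ω)) ℙ = volume.restrict (Set.Ioo (0:ℝ) 1))
    (ζ : ℝ) (hζ : 1 < ζ)
    (hmom : Integrable (fun ω => |min (X ω) 0| ^ ζ) ℙ)
    (p : ℝ) (hp : p ∈ Set.Ioo (0:ℝ) 1) :
    |(∫ ω, min (X ω) 0 * F₂ (Y ω) ∂(ℙ[|{ω | 1 - p < F₂ (Y ω)}])) -
        (∫ ω, min (X ω) 0 ∂(ℙ[|{ω | 1 - p < F₂ (Y ω)}])) *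
          (∫ ω, F₂ (Y ω) ∂(ℙ[|{ω | 1 - p < F₂ (Y ω)}]))| ≤
      (2 / p) * (∫ ω, |min (X ω) 0| ^ ζ ∂ℙ) ^ (1/ζ) *
        ((ℙ {ω | X ω < 0 ∧ 1 - F₂ (Y ω) < p}).toReal) ^ (1 - 1/ζ) := by
  obtain ⟨hp0, hp1⟩ := hp
  set g : Ω → ℝ := fun ω => F₂ (Y ω) with hg_def
  set f : Ω → ℝ := fun ω => min (X ω) 0 with hf_def
  have hmg : Measurable g := hmF₂.comp hmY
  have hmf : Measurable f := hmX.min measurable_const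
  set A : Set Ω := {ω | 1 - p < g ω} with hA_def
  set B : Set Ω := {ω | X ω < 0 ∧ 1 - g ω < p} with hB_def
  have hmA : MeasurableSet A := measurableSet_lt measurable_const hmg
  have hmB : MeasurableSet B := by
    have : B = {ω | X ω < 0} ∩ {ω | 1 - g ω < p} := rfl
    rw [this]
    exact (measurableSet_lt hmX measurable_const).inter
      (measurableSet_lt (measurable_const.sub hmg) measurable_const)
  -- measure of A is p
  have hPA : ℙ A = ENNReal.ofReal p := by
    have : A = g ⁻¹' Set.Ioi (1 - p) := rfl
    rw [this, ← Measure.map_apply hmg measurableSet_Ioi, huni,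
      Measure.restrict_apply measurableSet_Ioi]
    have : Set.Ioi (1 - p) ∩ Set.Ioo (0:ℝ) 1 = Set.Ioo (1 - p) 1 := by
      ext x
      constructor
      · rintro ⟨h1, _, h3⟩; exact ⟨h1, h3⟩
      · rintro ⟨h1, h2⟩; exact ⟨h1, lt_trans (by linarith) h1, h2⟩
    rw [this, Real.volume_Ioo]
    norm_num
  have hPA0 : ℙ A ≠ 0 := by
    rw [hPA]; simp [ENNReal.ofReal_eq_zero, not_le, hp0]
  have hPAtr : (ℙ A).toReal = p := by rw [hPA, ENNReal.toReal_ofReal hp0.le]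
  have hcond : IsProbabilityMeasure (ℙ[|A]) := cond_isProbabilityMeasure hPA0
  -- a.e., g ∈ (0,1)
  have hg01 : ∀ᵐ ω ∂(ℙ : Measure Ω), g ω ∈ Set.Ioo (0:ℝ) 1 := by
    have : ℙ (g ⁻¹' (Set.Ioo (0:ℝ) 1)ᶜ) = 0 := by
      rw [← Measure.map_apply hmg measurableSet_Ioo.compl, huni,
        Measure.restrict_apply measurableSet_Ioo.compl]
      simp
    exact this
  have hg01c : ∀ᵐ ω ∂(ℙ[|A]), g ω ∈ Set.Ioo (0:ℝ) 1 :=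
    cond_absolutelyContinuous.ae_le hg01
  -- integrability facts
  have hfabs_le : ∀ ω, |f ω| ≤ 1 + |f ω| ^ ζ := by
    intro ω
    rcases le_or_gt (|f ω|) 1 with h | h
    · have : (0:ℝ) ≤ |f ω| ^ ζ := Real.rpow_nonneg (abs_nonneg _) _
      linarith
    · have h1 : |f ω| = |f ω| ^ (1:ℝ) := (Real.rpow_one _).symm
      have h2 : |f ω| ^ (1:ℝ) ≤ |f ω| ^ ζ :=
        Real.rpow_le_rpow_of_exponent_le h.le hζ.le
      rw [Real.rpow_one] at h2
      linarith
  have hf_int : Integrable f ℙ := by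
    refine Integrable.mono' ((integrable_const (1:ℝ)).add hmom) hmf.aestronglyMeasurable ?_
    filter_upwards with ω
    simpa [Real.norm_eq_abs] using hfabs_le ω
  have hf_intc : Integrable f (ℙ[|A]) := by
    rw [ProbabilityTheory.cond]
    exact (hf_int.restrict).smul_measure (by simp [hPA0])
  have hfa_intc : Integrable (fun ω => |f ω|) (ℙ[|A]) := hf_intc.abs
  have hg_intc : Integrable g (ℙ[|A]) := by
    refine Integrable.mono' (integrable_const (1:ℝ)) hmg.aestronglyMeasurable ?_
    filter_upwards [hg01c] with ω hω
    rw [Real.norm_eq_abs, abs_of_pos hω.1]; exact hω.2.le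
  have hfg_intc : Integrable (fun ω => f ω * g ω) (ℙ[|A]) := by
    refine Integrable.mono' hfa_intc (hmf.mul hmg).aestronglyMeasurable ?_
    filter_upwards [hg01c] with ω hω
    rw [Real.norm_eq_abs, abs_mul]
    calc |f ω| * |g ω| ≤ |f ω| * 1 := by
          refine mul_le_mul_of_nonneg_left ?_ (abs_nonneg _)
          rw [abs_of_pos hω.1]; exact hω.2.le
      _ = |f ω| := mul_one _
  -- covariance bound by 2 ∫ |f|
  have h1 : |∫ ω, f ω * g ω ∂(ℙ[|A])| ≤ ∫ ω, |f ω| ∂(ℙ[|A]) := by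
    calc |∫ ω, f ω * g ω ∂(ℙ[|A])| ≤ ∫ ω, |f ω * g ω| ∂(ℙ[|A]) := by
          simpa only [Real.norm_eq_abs] using
            norm_integral_le_integral_norm (μ := ℙ[|A]) (fun ω => f ω * g ω)
      _ ≤ ∫ ω, |f ω| ∂(ℙ[|A]) := by
          refine integral_mono_ae hfg_intc.abs hfa_intc ?_
          filter_upwards [hg01c] with ω hω
          rw [abs_mul]
          calc |f ω| * |g ω| ≤ |f ω| * 1 := by
                refine mul_le_mul_of_nonneg_left ?_ (abs_nonneg _)
                rw [abs_of_pos hω.1]; exact hω.2.le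
            _ = |f ω| := mul_one _
  have h2 : |∫ ω, f ω ∂(ℙ[|A])| ≤ ∫ ω, |f ω| ∂(ℙ[|A]) := by
    simpa only [Real.norm_eq_abs] using norm_integral_le_integral_norm (μ := ℙ[|A]) f
  have h3 : |∫ ω, g ω ∂(ℙ[|A])| ≤ 1 := by
    rw [abs_le]
    constructor
    · calc (-1:ℝ) ≤ 0 := by norm_num
        _ ≤ ∫ ω, g ω ∂(ℙ[|A]) := by
            refine integral_nonneg_of_ae ?_
            filter_upwards [hg01c] with ω hω using hω.1.le
    · calc ∫ ω, g ω ∂(ℙ[|A]) ≤ ∫ _, (1:ℝ) ∂(ℙ[|A]) := by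
            refine integral_mono_ae hg_intc (integrable_const _) ?_
            filter_upwards [hg01c] with ω hω using hω.2.le
        _ = 1 := by simp
  have hIabs : 0 ≤ ∫ ω, |f ω| ∂(ℙ[|A]) := integral_nonneg fun ω => abs_nonneg _
  have hcov : |(∫ ω, f ω * g ω ∂(ℙ[|A])) - (∫ ω, f ω ∂(ℙ[|A])) * (∫ ω, g ω ∂(ℙ[|A]))|
      ≤ 2 * ∫ ω, |f ω| ∂(ℙ[|A]) := by
    calc |(∫ ω, f ω * g ω ∂(ℙ[|A])) - (∫ ω, f ω ∂(ℙ[|A])) * (∫ ω, g ω ∂(ℙ[|A]))|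
        ≤ |∫ ω, f ω * g ω ∂(ℙ[|A])| + |(∫ ω, f ω ∂(ℙ[|A])) * (∫ ω, g ω ∂(ℙ[|A]))| :=
          abs_sub _ _
      _ ≤ (∫ ω, |f ω| ∂(ℙ[|A])) + (∫ ω, |f ω| ∂(ℙ[|A])) * 1 := by
          refine add_le_add h1 ?_
          rw [abs_mul]
          exact mul_le_mul h2 h3 (abs_nonneg _) hIabs
      _ = 2 * ∫ ω, |f ω| ∂(ℙ[|A]) := by ring
  -- conditional integral of |f|
  have hIeq : ∫ ω, |f ω| ∂(ℙ[|A]) = p⁻¹ * ∫ ω in B, |f ω| ∂ℙ := by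
    rw [ProbabilityTheory.cond, integral_smul_measure]
    have hind : Set.indicator A (fun ω => |f ω|) = Set.indicator B (fun ω => |f ω|) := by
      ext ω
      by_cases hωA : ω ∈ A
      · by_cases hωB : ω ∈ B
        · rw [Set.indicator_of_mem hωA, Set.indicator_of_mem hωB]
        · have hX : ¬ X ω < 0 := by
            intro hX
            exact hωB ⟨hX, by simpa [hA_def, sub_lt_comm] using hωA⟩
          have : f ω = 0 := min_eq_right (not_lt.mp hX)
          simp [Set.indicator_of_mem hωA, Set.indicator_of_notMem hωB, this]
      · have hωB : ω ∉ B := fun hωB => hωA (by simpa [hA_def, sub_lt_comm] using hωB.2)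
        rw [Set.indicator_of_notMem hωA, Set.indicator_of_notMem hωB]
    have : ∫ ω in A, |f ω| ∂ℙ = ∫ ω in B, |f ω| ∂ℙ := by
      rw [← integral_indicator hmA, ← integral_indicator hmB, hind]
    rw [this, hPA, ← ENNReal.ofReal_inv_of_pos hp0,
      ENNReal.toReal_ofReal (inv_nonneg.mpr hp0.le), smul_eq_mul]
  -- Hölder
  set q : ℝ := ζ / (ζ - 1) with hq_def
  have hζ0 : (0:ℝ) < ζ := lt_trans zero_lt_one hζ
  have hconj : Real.HolderConjugate ζ q := by
    exact (Real.holderConjugate_iff_eq_conjExponent hζ).mpr hq_def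
  have hq_inv : 1 / q = 1 - 1 / ζ := by
    rw [hq_def]
    field_simp
  have hq0' : ENNReal.ofReal ζ ≠ 0 := by
    simp [ENNReal.ofReal_eq_zero, not_le, hζ0]
  have hmemf0 : MemLp f (ENNReal.ofReal ζ) ℙ := by
    rw [← memLp_norm_rpow_iff hmf.aestronglyMeasurable hq0' ENNReal.ofReal_ne_top,
      ENNReal.div_self hq0' ENNReal.ofReal_ne_top, ENNReal.toReal_ofReal hζ0.le,
      memLp_one_iff_integrable]
    simpa [Real.norm_eq_abs] using hmom
  have hmemf : MemLp (fun ω => |f ω|) (ENNReal.ofReal ζ) ℙ := by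
    simpa [Real.norm_eq_abs] using hmemf0.norm
  have hmemind : MemLp (B.indicator (fun _ => (1:ℝ))) (ENNReal.ofReal q) ℙ := by
    refine MemLp.mono_exponent ?_ (le_top)
    refine memLp_top_of_bound ((aestronglyMeasurable_const).indicator hmB) 1 ?_
    filter_upwards with ω
    by_cases hω : ω ∈ B <;> simp [hω]
  have hholder : ∫ ω in B, |f ω| ∂ℙ ≤
      (∫ ω, |f ω| ^ ζ ∂ℙ) ^ (1/ζ) * ((ℙ B).toReal) ^ (1 - 1/ζ) := by
    have key := integral_mul_le_Lp_mul_Lq_of_nonneg hconj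
      (f := fun ω => |f ω|) (g := B.indicator (fun _ => (1:ℝ)))
      (Filter.Eventually.of_forall fun ω => abs_nonneg _)
      (Filter.Eventually.of_forall fun ω => Set.indicator_nonneg (fun _ _ => zero_le_one) ω)
      hmemf hmemind
    have hL : ∫ ω, |f ω| * B.indicator (fun _ => (1:ℝ)) ω ∂ℙ = ∫ ω in B, |f ω| ∂ℙ := by
      rw [← integral_indicator hmB]
      congr 1
      ext ω
      by_cases hω : ω ∈ B <;> simp [hω]
    have hR : ∫ ω, B.indicator (fun _ => (1:ℝ)) ω ^ q ∂ℙ = (ℙ B).toReal := by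
      have : (fun ω => B.indicator (fun _ => (1:ℝ)) ω ^ q) =
          B.indicator (fun _ => (1:ℝ)) := by
        ext ω
        by_cases hω : ω ∈ B
        · simp [hω, Real.one_rpow]
        · simp [hω, Real.zero_rpow hconj.symm.ne_zero]
      rw [this, integral_indicator hmB]
      simp [measureReal_def]
    rw [hL, hR, hq_inv] at key
    exact key
  -- assemble
  have hgoal : |(∫ ω, f ω * g ω ∂(ℙ[|A])) -
        (∫ ω, f ω ∂(ℙ[|A])) * (∫ ω, g ω ∂(ℙ[|A]))| ≤
      (2 / p) * (∫ ω, |f ω| ^ ζ ∂ℙ) ^ (1/ζ) * ((ℙ B).toReal) ^ (1 - 1/ζ) := by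
    calc |(∫ ω, f ω * g ω ∂(ℙ[|A])) - (∫ ω, f ω ∂(ℙ[|A])) * (∫ ω, g ω ∂(ℙ[|A]))|
        ≤ 2 * ∫ ω, |f ω| ∂(ℙ[|A]) := hcov
      _ = 2 * (p⁻¹ * ∫ ω in B, |f ω| ∂ℙ) := by rw [hIeq]
      _ ≤ 2 * (p⁻¹ * ((∫ ω, |f ω| ^ ζ ∂ℙ) ^ (1/ζ) * ((ℙ B).toReal) ^ (1 - 1/ζ))) := by
          refine mul_le_mul_of_nonneg_left ?_ (by norm_num)
          exact mul_le_mul_of_nonneg_left hholder (inv_nonneg.mpr hp0.le)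
      _ = (2 / p) * (∫ ω, |f ω| ^ ζ ∂ℙ) ^ (1/ζ) * ((ℙ B).toReal) ^ (1 - 1/ζ) := by
          rw [div_eq_mul_inv]
          ring
  exact hgoal
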